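/- Let Y be a topological space and α an ordinal with α + 1 < Sh(Y). Then the sequential Cantor-Bendixson level SI_α(Y) is infinite. -/

import Mathlib

open Filter Topology Set

/-- Sequential Cantor-Bendixson levels. -/
noncomputable def SI (Y : Type) [TopologicalSpace Y] : Ordinal.{0} → Set Y :=
  fun α =>
    {x | (∀ β, β < α → x ∉ SI Y β) ∧
      ¬ ∃ s : ℕ → Y, Function.Injective s ∧ (∀ n, ∀ β, β < α → s n ∉ SI Y β) ∧
        Filter.Tendsto s Filter.atTop (nhds x)}
termination_by α => α
decreasing_by all_goals assumption

/-- The sequential height of `Y`. -/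
noncomputable def Sh (Y : Type) [TopologicalSpace Y] : Ordinal.{0} :=
  sInf {α | SI Y α = ∅}

lemma SI_mem_iff (Y : Type) [TopologicalSpace Y] (α : Ordinal.{0}) (x : Y) :
    x ∈ SI Y α ↔ (∀ β, β < α → x ∉ SI Y β) ∧
      ¬ ∃ s : ℕ → Y, Function.Injective s ∧ (∀ n, ∀ β, β < α → s n ∉ SI Y β) ∧
        Filter.Tendsto s Filter.atTop (nhds x) := by
  conv_lhs => rw [SI]
  rfl

/-- If `α + 1 < Sh Y` then the level `SI Y α` is infinite. -/
theorem SI_infinite (Y : Type) [TopologicalSpace Y]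
    (α : Ordinal.{0}) (h : α + 1 < Sh Y) : (SI Y α).Infinite := by
  intro hfin
  have hne : SI Y (α + 1) ≠ ∅ := by
    intro he
    exact absurd (csInf_le' (show (α + 1) ∈ {a | SI Y a = ∅} from he)) (not_le_of_gt h)
  obtain ⟨x, hx⟩ := Set.nonempty_iff_ne_empty.2 hne
  rw [SI_mem_iff] at hx
  obtain ⟨hx1, hx2⟩ := hx
  have hlt : α < α + 1 := lt_add_one α
  have hle : ∀ β : Ordinal.{0}, β < α + 1 → β ≤ α := by
    intro β hβ
    rw [Ordinal.add_one_eq_succ, Order.lt_succ_iff] at hβ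
    exact hβ
  have hxα : x ∉ SI Y α := hx1 α hlt
  have hfirst : ∀ β, β < α → x ∉ SI Y β := fun β hβ => hx1 β (hβ.trans hlt)
  have hseq : ∃ s : ℕ → Y, Function.Injective s ∧
      (∀ n, ∀ β, β < α → s n ∉ SI Y β) ∧ Tendsto s atTop (nhds x) := by
    by_contra hcon
    exact hxα ((SI_mem_iff Y α x).2 ⟨hfirst, hcon⟩)
  obtain ⟨s, hsinj, hs1, hs2⟩ := hseq
  have hpre : {n : ℕ | s n ∈ SI Y α}.Finite :=
    Set.Finite.preimage hsinj.injOn hfin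
  have hev : ∀ᶠ n in atTop, s n ∉ SI Y α := by
    rw [← Nat.cofinite_eq_atTop]
    exact Set.Finite.eventually_cofinite_notMem hpre
  obtain ⟨N, hN⟩ := eventually_atTop.1 hev
  refine hx2 ⟨fun n => s (n + N), ?_, ?_, ?_⟩
  · exact hsinj.comp (add_left_injective N)
  · intro n β hβ
    rcases lt_or_eq_of_le (hle β hβ) with hβ' | hβ'
    · exact hs1 _ β hβ'
    · subst hβ'; exact hN (n + N) (Nat.le_add_left N n)
  · exact hs2.comp (tendsto_add_atTop_nat N)
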